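/- Let n ≥ 2, p < 0, and φ ∈ (0, 1/n). For all x and y in the open simplex Δⁿ₊ with xᵢ > φ and yᵢ > φ for all i = 1,…,n, the diversity function G_p(z) := (Σᵢ zᵢᵖ)^{1/p} satisfies log(G_p(x)/G_p(y)) > log(n φ). -/

import Mathlib

open Finset Real

lemma bernoulli_neg_aux {p t : ℝ} (hp : p < 0) (ht : 0 < t) :
    1 + p * (t - 1) ≤ t ^ p := by
  rw [Real.rpow_def_of_pos ht, mul_comm (Real.log t) p]
  have h1 := Real.add_one_le_exp (p * Real.log t)
  have h2 := Real.log_le_sub_one_of_pos ht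
  have h3 : p * (t - 1) ≤ p * Real.log t := mul_le_mul_of_nonpos_left h2 hp.le
  linarith

/-- generating-function lower bound `log (G_p(x)/G_p(y)) > log (nφ)`
for the negative-parameter diversity function under the no-failure condition. -/
theorem diversity_function_ratio_log_bound
    (n : ℕ) (hn : 2 ≤ n) (p : ℝ) (hp : p < 0)
    (φ : ℝ) (hφ : 0 < φ ∧ φ < 1 / n)
    (x y : Fin n → ℝ)
    (hx : ∀ i, 0 < x i ∧ x i < 1) (hsumx : ∑ i, x i = 1) (hnfx : ∀ i, φ < x i)
    (hy : ∀ i, 0 < y i ∧ y i < 1) (hsumy : ∑ i, y i = 1) (hnfy : ∀ i, φ < y i) :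
    Real.log ((∑ i, x i ^ p) ^ (1 / p) / (∑ i, y i ^ p) ^ (1 / p)) >
      Real.log (n * φ) := by
  obtain ⟨hφ0, hφn⟩ := hφ
  have hp0 : p ≠ 0 := hp.ne
  have hip : 1 / p < 0 := one_div_neg.mpr hp
  have hN0 : (0 : ℝ) < (n : ℝ) := by exact_mod_cast (by omega : 0 < n)
  set N : ℝ := (n : ℝ) with hN
  -- positivity of sums
  have hSx : 0 < ∑ i, x i ^ p :=
    Finset.sum_pos (fun i _ => Real.rpow_pos_of_pos (hx i).1 p) ⟨⟨0, by omega⟩, mem_univ _⟩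
  have hSy : 0 < ∑ i, y i ^ p :=
    Finset.sum_pos (fun i _ => Real.rpow_pos_of_pos (hy i).1 p) ⟨⟨0, by omega⟩, mem_univ _⟩
  -- upper bound on ∑ xᵢ^p : each xᵢ^p < φ^p
  have hSxlt : ∑ i, x i ^ p < N * φ ^ p := by
    have h : ∑ i, x i ^ p < ∑ _i : Fin n, φ ^ p :=
      Finset.sum_lt_sum_of_nonempty ⟨⟨0, by omega⟩, mem_univ _⟩ fun i _ =>
        Real.rpow_lt_rpow_of_neg hφ0 (hnfx i) hp
    simpa [Finset.sum_const, Finset.card_univ, nsmul_eq_mul] using h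
  -- lower bound Gx > N^(1/p) * φ
  have hGx : N ^ (1/p) * φ < (∑ i, x i ^ p) ^ (1/p) := by
    have h1 : (N * φ ^ p) ^ (1/p) < (∑ i, x i ^ p) ^ (1/p) :=
      Real.rpow_lt_rpow_of_neg hSx hSxlt hip
    have h2 : (N * φ ^ p) ^ (1/p) = N ^ (1/p) * φ := by
      rw [Real.mul_rpow hN0.le (Real.rpow_pos_of_pos hφ0 p).le,
        ← Real.rpow_mul hφ0.le, mul_one_div_cancel hp0, Real.rpow_one]
    rw [← h2]; exact h1
  -- lower bound on ∑ yᵢ^p via Bernoulli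
  have hSyge : N ^ (1 - p) ≤ ∑ i, y i ^ p := by
    have hsum : ∑ i, (1 + p * (N * y i - 1)) ≤ ∑ i, (N * y i) ^ p :=
      Finset.sum_le_sum fun i _ => bernoulli_neg_aux hp (by have := (hy i).1; positivity)
    have hlhs : ∑ i, (1 + p * (N * y i - 1)) = N := by
      calc ∑ i, (1 + p * (N * y i - 1)) = ∑ i, ((1 - p) + (p * N) * y i) := by
            exact Finset.sum_congr rfl fun i _ => by ring
        _ = (n : ℝ) * (1 - p) + (p * N) * ∑ i, y i := by
            rw [Finset.sum_add_distrib, Finset.sum_const, ← Finset.mul_sum,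
              Finset.card_univ, Fintype.card_fin, nsmul_eq_mul]
        _ = N := by rw [hsumy]; rw [← hN]; ring
    have hrhs : ∑ i, (N * y i) ^ p = N ^ p * ∑ i, y i ^ p := by
      rw [Finset.mul_sum]
      exact Finset.sum_congr rfl fun i _ => Real.mul_rpow hN0.le (hy i).1.le
    rw [hlhs, hrhs] at hsum
    have hNp : 0 < N ^ p := Real.rpow_pos_of_pos hN0 p
    rw [Real.rpow_sub hN0, Real.rpow_one, div_le_iff₀ hNp]
    linarith [hsum]
  -- upper bound on Gy
  have hGy : (∑ i, y i ^ p) ^ (1/p) ≤ N ^ (1/p - 1) := by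
    have h1 : (∑ i, y i ^ p) ^ (1/p) ≤ (N ^ (1 - p)) ^ (1/p) :=
      Real.rpow_le_rpow_of_nonpos (Real.rpow_pos_of_pos hN0 _) hSyge hip.le
    have h2 : (N ^ (1 - p)) ^ (1/p) = N ^ (1/p - 1) := by
      rw [← Real.rpow_mul hN0.le]
      congr 1
      field_simp
    rw [← h2]; exact h1
  -- combine
  have hGy0 : 0 < (∑ i, y i ^ p) ^ (1/p) := Real.rpow_pos_of_pos hSy _
  have hGx0 : 0 < (∑ i, x i ^ p) ^ (1/p) := Real.rpow_pos_of_pos hSx _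
  have hratio : N * φ < (∑ i, x i ^ p) ^ (1/p) / (∑ i, y i ^ p) ^ (1/p) := by
    have key : N ^ (1/p) * φ / N ^ (1/p - 1) = N * φ := by
      rw [Real.rpow_sub hN0, Real.rpow_one]
      have h := (Real.rpow_pos_of_pos hN0 (1/p)).ne'
      field_simp
    calc N * φ = N ^ (1/p) * φ / N ^ (1/p - 1) := key.symm
      _ < (∑ i, x i ^ p) ^ (1/p) / (∑ i, y i ^ p) ^ (1/p) :=
        div_lt_div₀ hGx hGy hGx0.le hGy0
  exact Real.log_lt_log (by positivity) hratio
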